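/- For the generalized Pauli matrices X_d, Z_d on ℂ^d, the family {X_d^i Z_d^j : 0 ≤ i,j ≤ d−1} satisfies Σ_{i,j=0}^{d-1} X_d^i Z_d^j A (X_d^i Z_d^j)† = d·(tr A)·1 for every d×d matrix A. -/

import Mathlib

open scoped Matrix
open Complex Finset
open Fin.NatCast

/-- The generalized Pauli (shift) matrix on ℂ^d. -/
noncomputable def Xd (d : ℕ) [NeZero d] : Matrix (Fin d) (Fin d) ℂ :=
  Matrix.of fun i j => if j = i + 1 then 1 else 0

/-- The generalized Pauli (clock) matrix on ℂ^d. -/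
noncomputable def Zd (d : ℕ) [NeZero d] : Matrix (Fin d) (Fin d) ℂ :=
  Matrix.diagonal fun i => Complex.exp (2 * Real.pi * Complex.I * ((i : ℕ) + 1) / d)

lemma Xd_pow_apply (d : ℕ) [NeZero d] (i : ℕ) (a b : Fin d) :
    ((Xd d)^i) a b = if b = a + (i : Fin d) then 1 else 0 := by
  induction i generalizing a b with
  | zero => simp [Matrix.one_apply, eq_comm]
  | succ n ih =>
    rw [pow_succ, Matrix.mul_apply]
    simp only [ih]
    simp only [Xd, Matrix.of_apply, ite_mul, one_mul, zero_mul, mul_ite, mul_one, mul_zero]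
    rw [Finset.sum_eq_single (a + (n : Fin d))]
    · simp [add_assoc]
    · intro c _ hc; simp [hc]
    · simp

noncomputable def om (d : ℕ) [NeZero d] (x : Fin d) : ℂ :=
  Complex.exp (2 * Real.pi * Complex.I * ((x : ℕ) + 1) / d)

lemma Zd_pow (d : ℕ) [NeZero d] (j : ℕ) :
    (Zd d)^j = Matrix.diagonal fun x => (om d x)^j := by
  simp [Zd, Matrix.diagonal_pow, om]

lemma M_apply (d : ℕ) [NeZero d] (i j : ℕ) (a c : Fin d) :
    (Xd d ^ i * Zd d ^ j) a c = if c = a + (i : Fin d) then (om d c)^j else 0 := by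
  rw [Zd_pow, Matrix.mul_diagonal, Xd_pow_apply]
  simp [ite_mul]

lemma MA_apply (d : ℕ) [NeZero d] (A : Matrix (Fin d) (Fin d) ℂ) (i j : ℕ) (a c : Fin d) :
    (Xd d ^ i * Zd d ^ j * A) a c = (om d (a + i))^j * A (a + i) c := by
  rw [Matrix.mul_apply]
  simp only [M_apply, ite_mul, zero_mul, Finset.sum_ite_eq', Finset.mem_univ, if_true]

lemma entry (d : ℕ) [NeZero d] (A : Matrix (Fin d) (Fin d) ℂ) (i j : ℕ) (a b : Fin d) :
    (Xd d ^ i * Zd d ^ j * A * (Xd d ^ i * Zd d ^ j)ᴴ) a b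
      = (om d (a + i) * (starRingEnd ℂ) (om d (b + i)))^j * A (a + i) (b + i) := by
  rw [Matrix.mul_apply]
  simp only [Matrix.conjTranspose_apply, MA_apply, M_apply, apply_ite star, star_zero,
    mul_ite, mul_zero, Finset.sum_ite_eq', Finset.mem_univ, if_true]
  rw [mul_pow, ← map_pow]
  ring_nf
  rfl

lemma key (d : ℕ) [NeZero d] (a b : Fin d) :
    ∑ j ∈ Finset.range d, (om d a * (starRingEnd ℂ) (om d b))^j
      = if a = b then (d:ℂ) else 0 := by
  have hd : (d:ℂ) ≠ 0 := Nat.cast_ne_zero.mpr (NeZero.ne d)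
  have hz : om d a * (starRingEnd ℂ) (om d b)
      = Complex.exp (2 * Real.pi * Complex.I * (((a:ℕ):ℂ) - ((b:ℕ):ℂ)) / d) := by
    rw [om, om, ← Complex.exp_conj, ← Complex.exp_add]
    congr 1
    have h : (starRingEnd ℂ) (2 * ↑Real.pi * Complex.I * (((b:ℕ):ℂ) + 1) / ↑d)
        = -(2 * ↑Real.pi * Complex.I * (((b:ℕ):ℂ) + 1) / ↑d) := by
      simp only [map_div₀, map_mul, Complex.conj_I, map_add, map_one, map_ofNat,
        Complex.conj_ofReal, map_natCast]
      ring
    rw [h]; ring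
  by_cases h : a = b
  · subst h; rw [hz]; simp
  · rw [if_neg h, hz]
    set z := Complex.exp (2 * ↑Real.pi * Complex.I * (((a:ℕ):ℂ) - ((b:ℕ):ℂ)) / ↑d) with hzdef
    have h2pi : (2 * ↑Real.pi * Complex.I : ℂ) ≠ 0 := by
      simp [Real.pi_ne_zero, Complex.I_ne_zero]
    have hz1 : z ≠ 1 := by
      intro hc
      rw [hzdef, Complex.exp_eq_one_iff] at hc
      obtain ⟨n, hn⟩ := hc
      have hint : ((((a:ℕ):ℤ) - ((b:ℕ):ℤ) : ℤ) : ℂ) = ((n * d : ℤ) : ℂ) := by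
        push_cast
        field_simp at hn
        rw [mul_comm] at hn
        apply mul_right_cancel₀ h2pi
        rw [hn]
      have hk : (((a:ℕ):ℤ) - ((b:ℕ):ℤ)) = n * d := Int.cast_injective hint
      have hdvd : (d:ℤ) ∣ (((a:ℕ):ℤ) - ((b:ℕ):ℤ)) := ⟨n, by linarith [hk]⟩
      have habs : |(((a:ℕ):ℤ) - ((b:ℕ):ℤ))| < d := by
        have := a.isLt; have := b.isLt
        rw [abs_lt]; omega
      have := Int.eq_zero_of_abs_lt_dvd hdvd habs
      have : (a:ℕ) = (b:ℕ) := by omega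
      exact h (Fin.ext this)
    rw [geom_sum_eq hz1]
    have hzd : z ^ d = 1 := by
      rw [hzdef, ← Complex.exp_nat_mul]
      have heq : (d:ℂ) * (2 * ↑Real.pi * Complex.I * (((a:ℕ):ℂ) - ((b:ℕ):ℂ)) / ↑d)
          = ((((a:ℕ):ℤ) - ((b:ℕ):ℤ) : ℤ) : ℂ) * (2 * ↑Real.pi * Complex.I) := by
        push_cast; field_simp
      rw [heq, Complex.exp_int_mul_two_pi_mul_I]
    rw [hzd]; simp

/-- The generalized Pauli group is a unitary 1-design:
    Σ_{i,j} X^i Z^j A (X^i Z^j)† = d (tr A) 1. -/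
theorem stmt8 (d : ℕ) [NeZero d] (A : Matrix (Fin d) (Fin d) ℂ) :
    ∑ i ∈ Finset.range d, ∑ j ∈ Finset.range d,
      Xd d ^ i * Zd d ^ j * A * (Xd d ^ i * Zd d ^ j)ᴴ = ((d : ℂ) * A.trace) • 1 := by
  ext a b
  simp only [Matrix.sum_apply, entry]
  have h1 : ∀ i : ℕ,
      ∑ j ∈ Finset.range d, (om d (a + i) * (starRingEnd ℂ) (om d (b + i)))^j * A (a + i) (b + i)
        = if a = b then (d:ℂ) * A (a + i) (a + i) else 0 := by
    intro i
    rw [← Finset.sum_mul, key]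
    by_cases hab : a = b
    · subst hab; simp
    · rw [if_neg fun hc => hab (add_right_cancel hc), if_neg hab, zero_mul]
  simp only [h1]
  by_cases hab : a = b
  · subst hab
    simp only [if_true]
    rw [← Finset.mul_sum]
    have h2 : ∑ i ∈ Finset.range d, A (a + (i : Fin d)) (a + (i : Fin d)) = A.trace := by
      rw [← Fin.sum_univ_eq_sum_range (fun i => A (a + (i : Fin d)) (a + (i : Fin d)))]
      simp only [Fin.cast_val_eq_self]
      rw [Matrix.trace]
      exact Fintype.sum_equiv (Equiv.addLeft a) _ _ (fun x => rfl)
    rw [h2, Matrix.smul_apply, Matrix.one_apply_eq, smul_eq_mul, mul_one]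
  · simp only [if_neg hab, Finset.sum_const_zero, Matrix.smul_apply,
      Matrix.one_apply_ne hab, smul_eq_mul, mul_zero]
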